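/- The matching produced by the Constrained Random Serial Dictatorship mechanism is feasible and is an α-approximation of the government-optimal matching, i.e., its government objective value z(μ) is at least α times the maximum government objective value over all feasible matchings. -/

import Mathlib

open Classical

/-- A matching is feasible if each location `j` hosts exactly `q j` families. -/
def feasible {F L : Type} [Fintype F] [DecidableEq L] (q : L → ℕ) (μ : F → L) : Prop :=
  ∀ j : L, (Finset.univ.filter (fun i => μ i = j)).card = q j

/-- The government objective: expected number of successfully integrated families. -/
def z {F L : Type} [Fintype F] (π : F → L → ℝ) (μ : F → L) : ℝ :=
  ∑ i, π i (μ i)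

/-- `μ'` extends the partial matching `p`. -/
def ExtendsP {F L : Type} (μ' : F → L) (p : F → Option L) : Prop :=
  ∀ i j, p i = some j → μ' i = j

/-- There is a feasible completion of the partial matching `p` with objective at least `c`. -/
def okExt {F L : Type} [Fintype F] [DecidableEq L] (q : L → ℕ) (π : F → L → ℝ)
    (c : ℝ) (p : F → Option L) : Prop :=
  ∃ μ' : F → L, feasible q μ' ∧ ExtendsP μ' p ∧ c ≤ z π μ'

/-- Number of families currently assigned to location `j`. -/
def assignedCount {F L : Type} [Fintype F] [DecidableEq L] (p : F → Option L) (j : L) : ℕ :=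
  (Finset.univ.filter (fun i => p i = some j)).card

/-- One step of CRSD: family `i` is assigned to the first location in its preference list
that has remaining capacity and preserves achievability of objective value `c`. -/
noncomputable def crsdStep {F L : Type} [Fintype F] [DecidableEq F] [DecidableEq L]
    (q : L → ℕ) (π : F → L → ℝ) (c : ℝ) (prefs : F → List L)
    (p : F → Option L) (i : F) : F → Option L :=
  match (prefs i).find? (fun j =>
      decide (assignedCount p j < q j ∧ okExt q π c (Function.update p i (some j)))) with
  | some j => Function.update p i (some j)
  | none => p

/-- Running CRSD on the (random) order `order` of families, starting from the empty matching. -/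
noncomputable def crsdRun {F L : Type} [Fintype F] [DecidableEq F] [DecidableEq L]
    (q : L → ℕ) (π : F → L → ℝ) (c : ℝ) (prefs : F → List L)
    (order : List F) : F → Option L :=
  order.foldl (crsdStep q π c prefs) (fun _ => none)

section Aux

variable {F L : Type} [Fintype F] [DecidableEq F] [DecidableEq L]

lemma crsd_step_lemma (q : L → ℕ) (π : F → L → ℝ) (c : ℝ) (prefs : F → List L)
    (hprefs : ∀ i, ∀ j : L, j ∈ prefs i)
    (p : F → Option L) (i : F) (hp : okExt q π c p) (hi : p i = none) :
    ∃ j, crsdStep q π c prefs p i = Function.update p i (some j) ∧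
      okExt q π c (Function.update p i (some j)) := by
  obtain ⟨μ', hfeas, hext, hz⟩ := hp
  have hok : okExt q π c (Function.update p i (some (μ' i))) := by
    refine ⟨μ', hfeas, ?_, hz⟩
    intro k j hk
    rcases eq_or_ne k i with rfl | hne
    · rw [Function.update_self] at hk
      exact Option.some_injective _ hk
    · rw [Function.update_of_ne hne] at hk
      exact hext k j hk
  have hcount : assignedCount p (μ' i) < q (μ' i) := by
    have hsub : (Finset.univ.filter (fun k => p k = some (μ' i))) ⊂
        (Finset.univ.filter (fun k => μ' k = μ' i)) := by
      constructor
      · intro k hk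
        simp only [Finset.mem_filter] at hk ⊢
        exact ⟨hk.1, hext k _ hk.2⟩
      · intro hsub'
        have hmem : i ∈ Finset.univ.filter (fun k => μ' k = μ' i) := by simp
        have := hsub' hmem
        simp [hi] at this
    have := Finset.card_lt_card hsub
    rwa [hfeas (μ' i)] at this
  have hcand : ∃ x ∈ prefs i, (fun j => decide (assignedCount p j < q j ∧
      okExt q π c (Function.update p i (some j)))) x = true :=
    ⟨μ' i, hprefs i _, by simp only [decide_eq_true_eq]; exact ⟨hcount, hok⟩⟩
  obtain ⟨j₀, hj₀⟩ := List.find?_isSome.mpr hcand |> Option.isSome_iff_exists.mp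
  have hpred := List.find?_some hj₀
  simp only [decide_eq_true_eq] at hpred
  refine ⟨j₀, ?_, hpred.2⟩
  unfold crsdStep
  rw [hj₀]

lemma crsd_run_lemma (q : L → ℕ) (π : F → L → ℝ) (c : ℝ) (prefs : F → List L)
    (hprefs : ∀ i, ∀ j : L, j ∈ prefs i) :
    ∀ (l : List F) (p : F → Option L), okExt q π c p → l.Nodup →
      (∀ i ∈ l, p i = none) →
      okExt q π c (l.foldl (crsdStep q π c prefs) p) ∧
      (∀ i ∈ l, (l.foldl (crsdStep q π c prefs) p) i ≠ none) ∧
      (∀ i, p i ≠ none → (l.foldl (crsdStep q π c prefs) p) i = p i) := by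
  intro l
  induction l with
  | nil => intro p hp _ _; exact ⟨hp, by simp, fun _ _ => rfl⟩
  | cons i l ih =>
    intro p hp hnd hnone
    obtain ⟨j, hstep, hok⟩ := crsd_step_lemma q π c prefs hprefs p i hp
      (hnone i List.mem_cons_self)
    have hnd' := (List.nodup_cons.mp hnd)
    set p₁ := Function.update p i (some j) with hp₁
    have hnone' : ∀ k ∈ l, p₁ k = none := by
      intro k hk
      have hne : k ≠ i := fun h => hnd'.1 (h ▸ hk)
      rw [hp₁, Function.update_of_ne hne]
      exact hnone k (List.mem_cons_of_mem i hk)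
    obtain ⟨h1, h2, h3⟩ := ih p₁ hok hnd'.2 hnone'
    have hfold : (i :: l).foldl (crsdStep q π c prefs) p =
        l.foldl (crsdStep q π c prefs) p₁ := by
      simp [List.foldl_cons, hstep]
    refine ⟨hfold ▸ h1, ?_, ?_⟩
    · intro k hk
      rw [hfold]
      rcases List.mem_cons.mp hk with rfl | hk'
      · rw [h3 k (by rw [hp₁, Function.update_self]; simp), hp₁, Function.update_self]
        simp
      · exact h2 k hk'
    · intro k hk
      have hne : k ≠ i := fun h => hk (h ▸ hnone i List.mem_cons_self)
      rw [hfold, h3 k (by rw [hp₁, Function.update_of_ne hne]; exact hk),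
        hp₁, Function.update_of_ne hne]

end Aux

/-- The matching produced by CRSD is feasible and is an α-approximation of
the government-optimal matching. -/
theorem crsd_feasible_and_alpha_approx
    {F L : Type} [Fintype F] [Fintype L] [DecidableEq F] [DecidableEq L]
    (q : L → ℕ) (π : F → L → ℝ) (prefs : F → List L) (α zs : ℝ)
    (hq : ∑ j, q j = Fintype.card F)
    (hπ : ∀ i j, π i j ∈ Set.Icc (0 : ℝ) 1)
    (hα : α ∈ Set.Icc (0 : ℝ) 1)
    (hzs : IsGreatest {x : ℝ | ∃ μ : F → L, feasible q μ ∧ x = z π μ} zs)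
    (hprefs : ∀ i, (prefs i).Nodup ∧ ∀ j : L, j ∈ prefs i)
    (order : List F) (horder : order.Nodup) (hall : ∀ i : F, i ∈ order) :
    ∃ μ : F → L, (∀ i, crsdRun q π (α * zs) prefs order i = some (μ i)) ∧
      feasible q μ ∧ α * zs ≤ z π μ := by

  have hzs_nonneg : 0 ≤ zs := by
    obtain ⟨⟨μ₀, hμ₀, hzeq⟩, _⟩ := hzs
    rw [hzeq]
    exact Finset.sum_nonneg fun i _ => (hπ i (μ₀ i)).1
  have hc : α * zs ≤ zs := mul_le_of_le_one_left hzs_nonneg hα.2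
  have hok0 : okExt q π (α * zs) (fun _ => none) := by
    obtain ⟨⟨μ₀, hμ₀, hzeq⟩, _⟩ := hzs
    exact ⟨μ₀, hμ₀, fun i j h => by simp at h, hzeq ▸ hc⟩
  obtain ⟨h1, h2, _⟩ := crsd_run_lemma q π (α * zs) prefs (fun i => (hprefs i).2)
    order (fun _ => none) hok0 horder (fun _ _ => rfl)
  obtain ⟨μ', hfeas, hext, hz⟩ := h1
  refine ⟨μ', ?_, hfeas, hz⟩
  intro i
  obtain ⟨j, hj⟩ := Option.ne_none_iff_exists'.mp (h2 i (hall i))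
  unfold crsdRun
  rw [hj, hext i j hj]
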